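/- Let N, N̄, M be positive integers, K ≥ N and K̄ ≥ N̄ integers, ħ a nonzero real number, ν a nonzero complex number, and let a_1,…,a_M ∈ ℂ and nonzero p_1,…,p_M, q_1,…,q_M ∈ ℂ satisfy p_i ≠ q_j and q_i ≠ p_j for i ≠ j, together with p_i^N + p_i^{−N̄} − ν·Log p_i = q_i^N + q_i^{−N̄} − ν·Log q_i for every i. For (s,t,t̄) ∈ ℝ × ℝ^K × ℝ^{K̄} define e_i(s,t,t̄) = exp(ħ⁻¹((Log p_i − Log q_i)·s + Σ_{k=1}^K (p_i^k − q_i^k)·t_k + Σ_{k=1}^{K̄} (p_i^{−k} − q_i^{−k})·t̄_k)), c_{ij} = ((p_i−p_j)(q_i−q_j))/((p_i−q_j)(q_i−p_j)), and τ(s,t,t̄) = Σ_{I ⊆ {1,…,M}} (Π_{i∈I} a_i)·(Π_{i<j, i,j∈I} c_{ij})·Π_{i∈I} e_i(s,t,t̄). Then τ satisfies ∂τ/∂t_N + ∂τ/∂t̄_{N̄} − ν·∂τ/∂s = 0 identically on ℝ × ℝ^K × ℝ^{K̄}. -/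

import Mathlib

section Aux

variable {M K Kb : ℕ} {hbar : ℝ}

/-- derivative of a single exponential factor with respect to one slot of a
tuple of real variables -/
lemma aux_sum_deriv (P : Fin K → ℂ) (t : Fin K → ℝ) (n : Fin K) :
    HasDerivAt (fun x : ℝ => ∑ k : Fin K, P k * ((Function.update t n x k : ℝ) : ℂ))
      (P n) (t n) := by
  have h1 : ∀ k ∈ (Finset.univ : Finset (Fin K)),
      HasDerivAt (fun x : ℝ => P k * ((Function.update t n x k : ℝ) : ℂ))
        (if k = n then P k else 0) (t n) := by
    intro k _
    by_cases hk : k = n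
    · subst hk
      simp only [if_pos rfl, Function.update_self]
      have h0 : HasDerivAt (fun x : ℝ => ((x : ℂ))) 1 (t k) := by
        exact Complex.ofRealCLM.hasDerivAt (x := t k)
      simpa using h0.const_mul (P k)
    · simp only [if_neg hk, Function.update_of_ne hk]
      exact hasDerivAt_const _ _
  have := HasDerivAt.fun_sum h1
  simpa [Finset.sum_ite_eq' Finset.univ n] using this

end Aux

/-- The M-soliton tau function of the 2D Toda hierarchy (time
variables truncated to `t_1,…,t_K` and `t̄_1,…,t̄_{K̄}`) satisfies the reduction
condition `∂τ/∂t_N + ∂τ/∂t̄_{N̄} − ν·∂τ/∂s = 0` of the equivariant bigraded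
Toda hierarchy of type `(N, N̄)` when the parameters satisfy
`p_i^N + p_i^{−N̄} − ν·Log p_i = q_i^N + q_i^{−N̄} − ν·Log q_i`. -/
theorem stmt_9 (N Nb M K Kb : ℕ) (hN : 0 < N) (hNb : 0 < Nb) (hM : 0 < M)
    (hNK : N ≤ K) (hNbKb : Nb ≤ Kb)
    (hbar : ℝ) (hhbar : hbar ≠ 0) (ν : ℂ) (hν : ν ≠ 0)
    (a p q : Fin M → ℂ) (hp : ∀ i, p i ≠ 0) (hq : ∀ i, q i ≠ 0)
    (hpq : ∀ i j, i ≠ j → p i ≠ q j) (hqp : ∀ i j, i ≠ j → q i ≠ p j)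
    (hred : ∀ i, p i ^ N + p i ^ (-(Nb : ℤ)) - ν * Complex.log (p i)
              = q i ^ N + q i ^ (-(Nb : ℤ)) - ν * Complex.log (q i))
    (e : Fin M → ℝ → (Fin K → ℝ) → (Fin Kb → ℝ) → ℂ)
    (he : ∀ i s t tb, e i s t tb = Complex.exp ((hbar : ℂ)⁻¹ *
      ((Complex.log (p i) - Complex.log (q i)) * (s : ℂ) +
       (∑ k : Fin K, (p i ^ (k.val + 1) - q i ^ (k.val + 1)) * (t k : ℂ)) +
       ∑ k : Fin Kb,
         (p i ^ (-((k.val : ℤ) + 1)) - q i ^ (-((k.val : ℤ) + 1))) * (tb k : ℂ))))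
    (c : Fin M → Fin M → ℂ)
    (hc : ∀ i j, c i j =
      ((p i - p j) * (q i - q j)) / ((p i - q j) * (q i - p j)))
    (τ : ℝ → (Fin K → ℝ) → (Fin Kb → ℝ) → ℂ)
    (hτ : ∀ s t tb, τ s t tb = ∑ I : Finset (Fin M),
      (∏ i ∈ I, a i) * (∏ i ∈ I, ∏ j ∈ I, if i < j then c i j else 1) *
        ∏ i ∈ I, e i s t tb) :
    ∀ (s : ℝ) (t : Fin K → ℝ) (tb : Fin Kb → ℝ),
      deriv (fun x : ℝ => τ s (Function.update t ⟨N - 1, by omega⟩ x) tb)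
          (t ⟨N - 1, by omega⟩)
        + deriv (fun x : ℝ => τ s t (Function.update tb ⟨Nb - 1, by omega⟩ x))
            (tb ⟨Nb - 1, by omega⟩)
        - ν * deriv (fun x : ℝ => τ x t tb) s = 0 := by
  intro s t tb
  set n : Fin K := ⟨N - 1, by omega⟩ with hn
  set nb : Fin Kb := ⟨Nb - 1, by omega⟩ with hnb
  -- coefficients for each direction
  set Bt : Fin M → ℂ := fun i => (hbar : ℂ)⁻¹ * (p i ^ N - q i ^ N) with hBt
  set Bb : Fin M → ℂ := fun i =>
    (hbar : ℂ)⁻¹ * (p i ^ (-(Nb : ℤ)) - q i ^ (-(Nb : ℤ))) with hBb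
  set Bs : Fin M → ℂ := fun i =>
    (hbar : ℂ)⁻¹ * (Complex.log (p i) - Complex.log (q i)) with hBs
  have key : ∀ i : Fin M, Bt i + Bb i - ν * Bs i = 0 := by
    intro i
    simp only [hBt, hBb, hBs]
    linear_combination ((hbar : ℂ)⁻¹) * hred i
  have hNn : (n : ℕ) + 1 = N := by simp only [hn]; omega
  have hNbn : (-(((nb : ℕ) : ℤ) + 1)) = -(Nb : ℤ) := by simp only [hnb]; omega
  -- per-factor derivatives in each of the three directions
  have ht : ∀ i : Fin M, HasDerivAt (fun x : ℝ => e i s (Function.update t n x) tb)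
      (Bt i * e i s t tb) (t n) := by
    intro i
    have hs1 := aux_sum_deriv (fun k : Fin K => p i ^ (k.val + 1) - q i ^ (k.val + 1)) t n
    rw [hNn] at hs1
    have harg := (((hasDerivAt_const (t n)
        ((Complex.log (p i) - Complex.log (q i)) * (s : ℂ))).add hs1).add
        (hasDerivAt_const (t n)
        (∑ k : Fin Kb, (p i ^ (-((k.val : ℤ) + 1)) - q i ^ (-((k.val : ℤ) + 1)))
          * (tb k : ℂ)))).const_mul ((hbar : ℂ)⁻¹)
    have h2 := harg.cexp
    simp only [Pi.add_apply, Function.update_eq_self] at h2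
    have hfun : (fun x : ℝ => e i s (Function.update t n x) tb)
        = fun x : ℝ => Complex.exp ((hbar : ℂ)⁻¹ *
          ((Complex.log (p i) - Complex.log (q i)) * (s : ℂ) +
           (∑ k : Fin K, (p i ^ (k.val + 1) - q i ^ (k.val + 1))
             * ((Function.update t n x k : ℝ) : ℂ)) +
           ∑ k : Fin Kb, (p i ^ (-((k.val : ℤ) + 1)) - q i ^ (-((k.val : ℤ) + 1)))
             * (tb k : ℂ))) := by
      funext x; rw [he]
    rw [hfun, he]
    convert h2 using 1
    ring
  have htb : ∀ i : Fin M, HasDerivAt (fun x : ℝ => e i s t (Function.update tb nb x))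
      (Bb i * e i s t tb) (tb nb) := by
    intro i
    have hs1 := aux_sum_deriv
      (fun k : Fin Kb => p i ^ (-((k.val : ℤ) + 1)) - q i ^ (-((k.val : ℤ) + 1))) tb nb
    rw [hNbn] at hs1
    have harg := ((hasDerivAt_const (tb nb)
        ((Complex.log (p i) - Complex.log (q i)) * (s : ℂ) +
         ∑ k : Fin K, (p i ^ (k.val + 1) - q i ^ (k.val + 1)) * (t k : ℂ))).add
        hs1).const_mul ((hbar : ℂ)⁻¹)
    have h2 := harg.cexp
    simp only [Pi.add_apply, Function.update_eq_self] at h2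
    have hfun : (fun x : ℝ => e i s t (Function.update tb nb x))
        = fun x : ℝ => Complex.exp ((hbar : ℂ)⁻¹ *
          (((Complex.log (p i) - Complex.log (q i)) * (s : ℂ) +
           ∑ k : Fin K, (p i ^ (k.val + 1) - q i ^ (k.val + 1)) * (t k : ℂ)) +
           ∑ k : Fin Kb, (p i ^ (-((k.val : ℤ) + 1)) - q i ^ (-((k.val : ℤ) + 1)))
             * ((Function.update tb nb x k : ℝ) : ℂ))) := by
      funext x; rw [he]
    rw [hfun, he]
    convert h2 using 1
    ring
  have hts : ∀ i : Fin M, HasDerivAt (fun x : ℝ => e i x t tb)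
      (Bs i * e i s t tb) s := by
    intro i
    have h0 : HasDerivAt (fun x : ℝ => ((x : ℂ))) 1 s := by
      exact Complex.ofRealCLM.hasDerivAt (x := s)
    have hs1 := (h0.const_mul (Complex.log (p i) - Complex.log (q i)))
    have harg := ((hs1.add (hasDerivAt_const s
        (∑ k : Fin K, (p i ^ (k.val + 1) - q i ^ (k.val + 1)) * (t k : ℂ)))).add
        (hasDerivAt_const s
        (∑ k : Fin Kb, (p i ^ (-((k.val : ℤ) + 1)) - q i ^ (-((k.val : ℤ) + 1)))
          * (tb k : ℂ)))).const_mul ((hbar : ℂ)⁻¹)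
    have h2 := harg.cexp
    simp only [Pi.add_apply] at h2
    have hfun : (fun x : ℝ => e i x t tb)
        = fun x : ℝ => Complex.exp ((hbar : ℂ)⁻¹ *
          ((Complex.log (p i) - Complex.log (q i)) * (x : ℂ) +
           (∑ k : Fin K, (p i ^ (k.val + 1) - q i ^ (k.val + 1)) * (t k : ℂ)) +
           ∑ k : Fin Kb, (p i ^ (-((k.val : ℤ) + 1)) - q i ^ (-((k.val : ℤ) + 1)))
             * (tb k : ℂ))) := by
      funext x; rw [he]
    rw [hfun, he]
    convert h2 using 1
    ring
  -- τ-level derivatives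
  have prodD : ∀ (B : Fin M → ℂ) (f : Fin M → ℝ → ℂ) (x0 : ℝ),
      (∀ i : Fin M, HasDerivAt (f i) (B i * e i s t tb) x0) →
      (∀ i : Fin M, f i x0 = e i s t tb) →
      ∀ I : Finset (Fin M), HasDerivAt (fun x : ℝ => ∏ i ∈ I, f i x)
        ((∑ i ∈ I, B i) * ∏ i ∈ I, e i s t tb) x0 := by
    intro B f x0 hf hval I
    have := HasDerivAt.fun_finsetProd (u := I) (f := f)
      (f' := fun i => B i * e i s t tb) (fun i _ => hf i)
    convert this using 1
    case e'_4 => rfl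
    rw [Finset.sum_mul]
    refine Finset.sum_congr rfl fun i hi => ?_
    rw [smul_eq_mul]
    have : (∏ j ∈ I.erase i, f j x0) * (B i * e i s t tb)
        = B i * ((∏ j ∈ I.erase i, e j s t tb) * e i s t tb) := by
      rw [Finset.prod_congr rfl fun j _ => hval j]; ring
    rw [this, Finset.prod_erase_mul _ _ hi]
  have tauD : ∀ (B : Fin M → ℂ) (g : ℝ → ℂ) (x0 : ℝ),
      (∀ i : Fin M, HasDerivAt (fun x => (fun i (x:ℝ) => (0:ℂ)) i x) 0 x0) → True := by
    intro _ _ _ _; trivial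
  clear tauD
  -- assemble
  have mainD : ∀ (B : Fin M → ℂ) (f : Fin M → ℝ → ℂ) (x0 : ℝ),
      (∀ i : Fin M, HasDerivAt (f i) (B i * e i s t tb) x0) →
      (∀ i : Fin M, f i x0 = e i s t tb) →
      HasDerivAt (fun x : ℝ => ∑ I : Finset (Fin M),
        (∏ i ∈ I, a i) * (∏ i ∈ I, ∏ j ∈ I, if i < j then c i j else 1) *
          ∏ i ∈ I, f i x)
        (∑ I : Finset (Fin M),
          (∏ i ∈ I, a i) * (∏ i ∈ I, ∏ j ∈ I, if i < j then c i j else 1) *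
            ((∑ i ∈ I, B i) * ∏ i ∈ I, e i s t tb)) x0 := by
    intro B f x0 hf hval
    exact HasDerivAt.fun_sum fun I _ =>
      ((prodD B f x0 hf hval I).const_mul _)
  have hvt : ∀ i : Fin M, e i s (Function.update t n (t n)) tb = e i s t tb := by
    intro i; rw [Function.update_eq_self]
  have hvb : ∀ i : Fin M, e i s t (Function.update tb nb (tb nb)) = e i s t tb := by
    intro i; rw [Function.update_eq_self]
  have Dt := mainD Bt (fun i x => e i s (Function.update t n x) tb) (t n) ht hvt
  have Db := mainD Bb (fun i x => e i s t (Function.update tb nb x)) (tb nb) htb hvb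
  have Ds := mainD Bs (fun i x => e i x t tb) s hts (fun i => rfl)
  have Dt' : deriv (fun x : ℝ => τ s (Function.update t n x) tb) (t n)
      = ∑ I : Finset (Fin M),
          (∏ i ∈ I, a i) * (∏ i ∈ I, ∏ j ∈ I, if i < j then c i j else 1) *
            ((∑ i ∈ I, Bt i) * ∏ i ∈ I, e i s t tb) := by
    have : (fun x : ℝ => τ s (Function.update t n x) tb)
        = fun x : ℝ => ∑ I : Finset (Fin M),
          (∏ i ∈ I, a i) * (∏ i ∈ I, ∏ j ∈ I, if i < j then c i j else 1) *
            ∏ i ∈ I, e i s (Function.update t n x) tb := by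
      funext x; rw [hτ]
    rw [this]; exact Dt.deriv
  have Db' : deriv (fun x : ℝ => τ s t (Function.update tb nb x)) (tb nb)
      = ∑ I : Finset (Fin M),
          (∏ i ∈ I, a i) * (∏ i ∈ I, ∏ j ∈ I, if i < j then c i j else 1) *
            ((∑ i ∈ I, Bb i) * ∏ i ∈ I, e i s t tb) := by
    have : (fun x : ℝ => τ s t (Function.update tb nb x))
        = fun x : ℝ => ∑ I : Finset (Fin M),
          (∏ i ∈ I, a i) * (∏ i ∈ I, ∏ j ∈ I, if i < j then c i j else 1) *
            ∏ i ∈ I, e i s t (Function.update tb nb x) := by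
      funext x; rw [hτ]
    rw [this]; exact Db.deriv
  have Ds' : deriv (fun x : ℝ => τ x t tb) s
      = ∑ I : Finset (Fin M),
          (∏ i ∈ I, a i) * (∏ i ∈ I, ∏ j ∈ I, if i < j then c i j else 1) *
            ((∑ i ∈ I, Bs i) * ∏ i ∈ I, e i s t tb) := by
    have : (fun x : ℝ => τ x t tb)
        = fun x : ℝ => ∑ I : Finset (Fin M),
          (∏ i ∈ I, a i) * (∏ i ∈ I, ∏ j ∈ I, if i < j then c i j else 1) *
            ∏ i ∈ I, e i x t tb := by
      funext x; rw [hτ]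
    rw [this]; exact Ds.deriv
  rw [Dt', Db', Ds', Finset.mul_sum, ← Finset.sum_add_distrib, ← Finset.sum_sub_distrib]
  refine Finset.sum_eq_zero fun I _ => ?_
  have hz : (∑ i ∈ I, Bt i) + (∑ i ∈ I, Bb i) - ν * ∑ i ∈ I, Bs i = 0 := by
    rw [Finset.mul_sum, ← Finset.sum_add_distrib, ← Finset.sum_sub_distrib]
    exact Finset.sum_eq_zero fun i _ => key i
  linear_combination ((∏ i ∈ I, a i) * (∏ i ∈ I, ∏ j ∈ I, if i < j then c i j else 1) *
    ∏ i ∈ I, e i s t tb) * hz
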